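/- Let E and F be locally convex Hausdorff real topological vector spaces and let Φ : E → F be continuous. Then Φ is a polynomial — i.e., there exist n ∈ ℕ, a vector w₀ ∈ F, and maps M_k : E^k → F for k = 1, …, n, each symmetric and linear separately in each coordinate, such that Φ(e) = w₀ + M₁(e) + M₂(e, e) + ⋯ + M_n(e, …, e) for all e ∈ E — if and only if there exists m ∈ ℕ such that for every continuous linear functional ν on F and all e, b ∈ E, the function t ↦ ν(Φ(t•e + b)) coincides with a polynomial of degree at most m. -/

import Mathlib

open Polynomial
set_option linter.unusedSectionVars false
set_option maxHeartbeats 1000000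

namespace Stmt7

variable {E : Type*} [AddCommGroup E] [Module ℝ E]
variable {V : Type*} [AddCommGroup V] [Module ℝ V]

def diffF (h : E) (f : E → V) : E → V := fun x => f (x + h) - f x

def iterDiff : List E → (E → V) → E → V
  | [], f => f
  | h :: l, f => diffF h (iterDiff l f)

@[simp] lemma iterDiff_nil (f : E → V) : iterDiff ([] : List E) f = f := rfl

@[simp] lemma iterDiff_cons (h : E) (l : List E) (f : E → V) :
    iterDiff (h :: l) f = diffF h (iterDiff l f) := rfl

lemma diffF_comm (a b : E) (f : E → V) : diffF a (diffF b f) = diffF b (diffF a f) := by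
  funext x
  simp only [diffF]
  rw [add_right_comm]
  abel

lemma iterDiff_diffF (l : List E) (h : E) (f : E → V) :
    iterDiff l (diffF h f) = diffF h (iterDiff l f) := by
  induction l with
  | nil => rfl
  | cons a l ih => simp [iterDiff, ih, diffF_comm]

lemma iterDiff_cons' (h : E) (l : List E) (f : E → V) :
    iterDiff (h :: l) f = iterDiff l (diffF h f) := by
  simp [iterDiff_diffF]

lemma iterDiff_perm {l l' : List E} (p : l.Perm l') (f : E → V) :
    iterDiff l f = iterDiff l' f := by
  induction p with
  | nil => rfl
  | cons a _ ih => simp [iterDiff, ih]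
  | swap a b l => simp [iterDiff, diffF_comm]
  | trans _ _ ih1 ih2 => rw [ih1, ih2]

lemma iterDiff_linearmap (l : List E) (f : E → V) (ν : V →ₗ[ℝ] ℝ) (x : E) :
    ν (iterDiff l f x) = iterDiff l (fun y => ν (f y)) x := by
  induction l generalizing x with
  | nil => rfl
  | cons a l ih => simp [iterDiff, diffF, ← ih]

lemma iterDiff_finset_sum {ι : Type*} (s : Finset ι) (g : ι → E → ℝ) (l : List E) (x : E) :
    iterDiff l (fun y => ∑ j ∈ s, g j y) x = ∑ j ∈ s, iterDiff l (g j) x := by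
  induction l generalizing x with
  | nil => rfl
  | cons a l ih => simp [iterDiff, diffF, ih, Finset.sum_sub_distrib]

lemma iterDiff_const_mul (c : ℝ) (g : E → ℝ) (l : List E) (x : E) :
    iterDiff l (fun y => c * g y) x = c * iterDiff l g x := by
  induction l generalizing x with
  | nil => rfl
  | cons a l ih => simp [iterDiff, diffF, ih]; ring

section scalar

noncomputable def fdiff (p : ℝ[X]) : ℝ[X] := taylor 1 p - p

lemma fdiff_eval (p : ℝ[X]) (t : ℝ) : (fdiff p).eval t = p.eval (t + 1) - p.eval t := by
  simp [fdiff, taylor_apply, eval_comp]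

lemma coeff_taylor_one_of_ge {p : ℝ[X]} {k : ℕ} (hp : p.natDegree ≤ k + 1) {j : ℕ}
    (hj : k + 1 ≤ j) : (taylor 1 p).coeff j = p.coeff j := by
  rw [taylor_coeff]
  have hd : (hasseDeriv j p).natDegree < 1 := by
    have := natDegree_hasseDeriv_le p j
    omega
  rw [eval_eq_sum_range' hd]
  simp [hasseDeriv_coeff]

lemma natDegree_fdiff {p : ℝ[X]} {k : ℕ} (hp : p.natDegree ≤ k + 1) :
    (fdiff p).natDegree ≤ k := by
  rw [natDegree_le_iff_coeff_eq_zero]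
  intro N hN
  have : k + 1 ≤ N := hN
  simp [fdiff, coeff_sub, coeff_taylor_one_of_ge hp this]

lemma coeff_fdiff_top {p : ℝ[X]} {k : ℕ} (hp : p.natDegree ≤ k + 1) :
    (fdiff p).coeff k = (k + 1) * p.coeff (k + 1) := by
  rw [fdiff, coeff_sub, taylor_coeff]
  have hd : (hasseDeriv k p).natDegree < 2 := by
    have := natDegree_hasseDeriv_le p k
    omega
  rw [eval_eq_sum_range' hd]
  rw [Finset.sum_range_succ, Finset.sum_range_succ, Finset.sum_range_zero]
  simp only [hasseDeriv_coeff, zero_add, Nat.choose_self, Nat.cast_one, one_pow, mul_one]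
  have h1 : (1 + k).choose k = k + 1 := by
    rw [Nat.add_comm]
    exact Nat.choose_succ_self_right k
  rw [h1]
  push_cast
  ring

/-- iterated unit differences of a polynomial of degree ≤ k compute k! times top coeff -/
lemma iterDiff_replicate_one_eval :
    ∀ (k : ℕ) (p : ℝ[X]), p.natDegree ≤ k → ∀ t₀ : ℝ,
    iterDiff (List.replicate k (1 : ℝ)) (fun t => p.eval t) t₀ = (k.factorial : ℝ) * p.coeff k := by
  intro k
  induction k with
  | zero =>
    intro p hp t₀
    simp only [List.replicate, iterDiff_nil, Nat.factorial_zero, Nat.cast_one, one_mul]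
    conv_lhs => rw [eq_C_of_natDegree_le_zero hp]
    simp
  | succ k ih =>
    intro p hp t₀
    rw [List.replicate_succ, iterDiff_cons']
    have : diffF (1 : ℝ) (fun t => p.eval t) = fun t => (fdiff p).eval t := by
      funext t; simp [diffF, fdiff_eval]
    rw [this, ih (fdiff p) (natDegree_fdiff hp) t₀, coeff_fdiff_top hp,
      Nat.factorial_succ]
    push_cast
    ring

/-- bridge between differences in `E` along `e` and unit differences in `ℝ` -/
lemma iterDiff_replicate_bridge (G : E → ℝ) (e b : E) :
    ∀ (k : ℕ) (t₀ : ℝ),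
    iterDiff (List.replicate k (1 : ℝ)) (fun t => G (t • e + b)) t₀ =
      iterDiff (List.replicate k e) G (t₀ • e + b) := by
  intro k
  induction k with
  | zero => intro t₀; simp
  | succ k ih =>
    intro t₀
    rw [List.replicate_succ, List.replicate_succ]
    simp only [iterDiff_cons, diffF]
    rw [ih, ih]
    congr 2
    rw [add_smul, one_smul]
    abel

end scalar

/-- G has all line restrictions polynomial of degree at most d. -/
def LineP (d : ℕ) (G : E → ℝ) : Prop :=
  ∀ e b : E, ∃ p : ℝ[X], p.natDegree ≤ d ∧ ∀ t : ℝ, G (t • e + b) = p.eval t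

lemma coeff_comp_C_mul_X (q : ℝ[X]) (u : ℝ) (n : ℕ) :
    (q.comp (C u * X)).coeff n = q.coeff n * u ^ n := by
  rw [comp_eq_sum_left, Polynomial.coeff_sum]
  rw [Polynomial.sum_def]
  have : ∀ e ∈ q.support, (C (q.coeff e) * (C u * X) ^ e).coeff n
      = if e = n then q.coeff n * u ^ n else 0 := by
    intro e _
    rw [mul_pow, ← C_pow, ← mul_assoc, ← C_mul, coeff_C_mul_X_pow]
    by_cases h : n = e
    · subst h; simp
    · rw [if_neg h, if_neg (fun he => h he.symm)]
  rw [Finset.sum_congr rfl this, Finset.sum_ite_eq' q.support n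
    (fun _ => q.coeff n * u ^ n)]
  split_ifs with h
  · rfl
  · simp [Polynomial.notMem_support_iff.mp h]


section core

variable (G : E → ℝ)

/-- key two-variable lemma: for a function whose line restrictions have degree ≤ D,
the D-fold difference along a fixed direction is translation invariant. -/
lemma topdiff_shift {D : ℕ} (hD : 1 ≤ D) (hG : LineP D G) (e h b : E) :
    iterDiff (List.replicate D e) G (b + h) = iterDiff (List.replicate D e) G b := by
  classical
  set s : Finset ℕ := Finset.range (D + 1) with hs
  have hvs : Set.InjOn (Nat.cast : ℕ → ℝ) s := fun a _ b _ hab => Nat.cast_injective hab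
  set B : ℕ → ℝ[X] := fun j => Lagrange.basis s (Nat.cast : ℕ → ℝ) j with hB
  -- polynomials along the e-lines with base points on the h-line
  choose p hpd hpe using fun j : ℕ => hG e ((j : ℝ) • h + b)
  -- Lagrange representation
  have LR : ∀ s' t : ℝ, G (t • e + (s' • h + b)) =
      ∑ j ∈ s, (B j).eval s' * (p j).eval t := by
    intro s' t
    obtain ⟨w, hw, hwE⟩ := hG h (t • e + b)
    have h1 : G (t • e + (s' • h + b)) = w.eval s' := by
      rw [← hwE s']; congr 1; abel
    have hdeg : w.degree < s.card := by
      rw [hs, Finset.card_range]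
      exact lt_of_le_of_lt degree_le_natDegree
        (by exact_mod_cast Nat.lt_succ_of_le hw)
    have h2 := Lagrange.eq_interpolate hvs hdeg
    rw [h1, h2, Lagrange.interpolate_apply, eval_finset_sum]
    refine Finset.sum_congr rfl fun j _ => ?_
    rw [eval_mul, eval_C, mul_comm]
    congr 1
    rw [← hwE ((j : ℝ)), ← hpe j t]
    congr 1; abel
  -- vanishing of the mixed coefficients
  have KEY2 : ∀ a : ℕ, 1 ≤ a → ∑ j ∈ s, (B j).coeff a * (p j).coeff D = 0 := by
    intro a ha
    set W : ℝ[X] := ∑ j ∈ s, ∑ i ∈ Finset.HasAntidiagonal.antidiagonal (a + D),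
        ((B j).coeff i.1 * (p j).coeff i.2) • X ^ i.1 with hW
    have hWu : ∀ u : ℝ, W.eval u = 0 := by
      intro u
      obtain ⟨q, hq, hqE⟩ := hG (u • h + e) b
      set Ru : ℝ[X] := ∑ j ∈ s, ((B j).comp (C u * X)) * p j with hRu
      have hqR : q = Ru := by
        apply Polynomial.funext
        intro σ
        have h1 : q.eval σ = G (σ • e + ((σ * u) • h + b)) := by
          rw [← hqE σ]; congr 1
          rw [smul_add, smul_smul, mul_comm σ u]
          rw [mul_smul]
          abel
        rw [h1, LR (σ * u) σ, hRu, eval_finset_sum]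
        refine Finset.sum_congr rfl fun j _ => ?_
        rw [eval_mul, eval_comp, eval_mul, eval_C, eval_X, mul_comm u σ]
      have hcq : Ru.coeff (a + D) = 0 := by
        rw [← hqR]
        apply coeff_eq_zero_of_natDegree_lt
        omega
      have hcR : Ru.coeff (a + D) = W.eval u := by
        rw [hRu, finset_sum_coeff]
        rw [hW, eval_finset_sum]
        refine Finset.sum_congr rfl fun j _ => ?_
        rw [coeff_mul, eval_finset_sum]
        refine Finset.sum_congr rfl fun i hi => ?_
        rw [coeff_comp_C_mul_X, eval_smul, eval_pow, eval_X, smul_eq_mul]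
        ring
      rw [← hcR, hcq]
    have hW0 : W = 0 := Polynomial.funext (by simp [hWu])
    have := congrArg (fun q : ℝ[X] => q.coeff a) hW0
    simp only [hW, finset_sum_coeff, coeff_zero] at this
    rw [← this]
    refine Finset.sum_congr rfl fun j _ => ?_
    rw [Finset.sum_eq_single (a, D)]
    · rw [coeff_smul, coeff_X_pow, if_pos rfl, smul_eq_mul, mul_one]
    · intro x hx hne
      rw [Finset.HasAntidiagonal.mem_antidiagonal] at hx
      have hx1 : x.1 ≠ a := by
        intro h1
        apply hne
        have : x.2 = D := by omega
        exact Prod.ext h1 this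
      rw [coeff_smul, coeff_X_pow, if_neg (fun hh => hx1 hh.symm), smul_eq_mul, mul_zero]
    · intro hmem
      exact absurd (Finset.HasAntidiagonal.mem_antidiagonal.mpr (rfl : (a, D).1 + (a, D).2 = a + D)) hmem
  -- the value of the D-fold difference at base points on the h-line
  have VAL : ∀ s' : ℝ, iterDiff (List.replicate D e) G (s' • h + b) =
      ∑ j ∈ s, (B j).eval s' * ((D.factorial : ℝ) * (p j).coeff D) := by
    intro s'
    have h0 : iterDiff (List.replicate D e) G (s' • h + b) =
        iterDiff (List.replicate D (1 : ℝ)) (fun t => G (t • e + (s' • h + b))) 0 := by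
      rw [iterDiff_replicate_bridge]
      congr 1
      rw [zero_smul, zero_add]
    rw [h0]
    have h1 : (fun t : ℝ => G (t • e + (s' • h + b))) =
        fun t => ∑ j ∈ s, (B j).eval s' * (p j).eval t := by
      funext t; exact LR s' t
    rw [h1, iterDiff_finset_sum]
    refine Finset.sum_congr rfl fun j _ => ?_
    rw [iterDiff_const_mul, iterDiff_replicate_one_eval D (p j) (hpd j) 0]
  -- conclude
  have hv1 : b + h = (1 : ℝ) • h + b := by rw [one_smul]; abel
  have hv0 : b = (0 : ℝ) • h + b := by rw [zero_smul, zero_add]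
  have A1 : iterDiff (List.replicate D e) G (b + h) =
      ∑ j ∈ s, (B j).eval 1 * ((D.factorial : ℝ) * (p j).coeff D) := by
    conv_lhs => rw [hv1]
    exact VAL 1
  have A0 : iterDiff (List.replicate D e) G b =
      ∑ j ∈ s, (B j).eval 0 * ((D.factorial : ℝ) * (p j).coeff D) := by
    conv_lhs => rw [hv0]
    exact VAL 0
  rw [A1, A0]
  have he1 : ∀ j ∈ s, (B j).eval 1 =
      ∑ a ∈ Finset.range (D + 1), (B j).coeff a := by
    intro j hj
    have hnd : (B j).natDegree < D + 1 := by
      rw [hB, Lagrange.natDegree_basis hvs hj, hs, Finset.card_range]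
      omega
    rw [eval_eq_sum_range' hnd]
    simp
  have he0 : ∀ j, (B j).eval 0 = (B j).coeff 0 := fun j =>
    (coeff_zero_eq_eval_zero _).symm
  calc ∑ j ∈ s, (B j).eval 1 * ((D.factorial : ℝ) * (p j).coeff D)
      = ∑ a ∈ Finset.range (D + 1), ∑ j ∈ s,
          (B j).coeff a * ((D.factorial : ℝ) * (p j).coeff D) := by
        rw [Finset.sum_comm]
        refine Finset.sum_congr rfl fun j hj => ?_
        rw [he1 j hj, Finset.sum_mul]
    _ = ∑ j ∈ s, (B j).coeff 0 * ((D.factorial : ℝ) * (p j).coeff D) := by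
        rw [Finset.sum_eq_single_of_mem 0 (Finset.mem_range.mpr (by omega))]
        intro a _ ha
        have h1 : ∑ j ∈ s, (B j).coeff a * ((D.factorial : ℝ) * (p j).coeff D)
            = (D.factorial : ℝ) * ∑ j ∈ s, (B j).coeff a * (p j).coeff D := by
          rw [Finset.mul_sum]
          refine Finset.sum_congr rfl fun j _ => ?_
          ring
        rw [h1, KEY2 a (by omega), mul_zero]
    _ = ∑ j ∈ s, (B j).eval 0 * ((D.factorial : ℝ) * (p j).coeff D) := by
        refine Finset.sum_congr rfl fun j _ => ?_
        rw [he0 j]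

/-- differencing drops the line degree by one -/
lemma LineP.diffF_step {d : ℕ} {G : E → ℝ} (hG : LineP (d + 1) G) (h : E) :
    LineP d (diffF h G) := by
  intro e b
  obtain ⟨q₁, hq₁, hq₁E⟩ := hG e (b + h)
  obtain ⟨q₂, hq₂, hq₂E⟩ := hG e b
  have key : q₁.coeff (d + 1) = q₂.coeff (d + 1) := by
    have hfac : ((d + 1).factorial : ℝ) ≠ 0 := by
      exact_mod_cast Nat.factorial_ne_zero (d + 1)
    have hs : ∀ (c : E) (q : ℝ[X]), q.natDegree ≤ d + 1 → (∀ t, G (t • e + c) = q.eval t) →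
        ((d + 1).factorial : ℝ) * q.coeff (d + 1) = iterDiff (List.replicate (d + 1) e) G c := by
      intro c q hq hEq
      rw [← iterDiff_replicate_one_eval (d + 1) q hq 0]
      have : (fun t : ℝ => q.eval t) = fun t => G (t • e + c) := by
        funext t; rw [hEq t]
      rw [this, iterDiff_replicate_bridge]
      congr 1
      rw [zero_smul, zero_add]
    have h1 := hs (b + h) q₁ hq₁ hq₁E
    have h2 := hs b q₂ hq₂ hq₂E
    have h3 := topdiff_shift G (by omega) hG e h b
    have : ((d + 1).factorial : ℝ) * q₁.coeff (d + 1)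
        = ((d + 1).factorial : ℝ) * q₂.coeff (d + 1) := by rw [h1, h2, h3]
    exact mul_left_cancel₀ hfac this
  refine ⟨q₁ - q₂, ?_, ?_⟩
  · rw [natDegree_le_iff_coeff_eq_zero]
    intro N hN
    rw [coeff_sub]
    rcases Nat.lt_or_ge (d + 1) N with hlt | hge
    · rw [coeff_eq_zero_of_natDegree_lt (by omega), coeff_eq_zero_of_natDegree_lt (by omega),
        sub_self]
    · have : N = d + 1 := by omega
      rw [this, key, sub_self]
  · intro t
    simp only [diffF]
    rw [eval_sub, ← hq₁E t, ← hq₂E t]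
    congr 2
    abel

/-- the core vanishing result: mixed differences of order d+1 kill functions
whose line restrictions are polynomial of degree ≤ d. -/
lemma LineP.iterDiff_vanish : ∀ (d : ℕ) (G : E → ℝ), LineP d G →
    ∀ (l : List E), l.length = d + 1 → ∀ x, iterDiff l G x = 0 := by
  intro d
  induction d with
  | zero =>
    intro G hG l hl x
    match l, hl with
    | [h], _ =>
      obtain ⟨p, hp, hpE⟩ := hG h x
      have h1 : G (x + h) = p.eval 1 := by
        rw [← hpE 1]; congr 1; rw [one_smul]; abel
      have h0 : G x = p.eval 0 := by
        rw [← hpE 0]; congr 1; rw [zero_smul, zero_add]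
      have hpc := eq_C_of_natDegree_le_zero hp
      have hcc : p.eval 1 = p.eval 0 := by
        conv_lhs => rw [hpc]
        conv_rhs => rw [hpc]
        simp
      show G (x + h) - G x = 0
      rw [h1, h0, hcc, sub_self]
  | succ d ih =>
    intro G hG l hl x
    match l, hl with
    | h :: l', hl =>
      rw [iterDiff_cons']
      exact ih (diffF h G) (hG.diffF_step h) l' (by simpa using hl) x

end core


section Fvalued

variable {F : Type*} [AddCommGroup F] [Module ℝ F] [TopologicalSpace F]

lemma sep_eq_zero [SeparatingDual ℝ F] {x : F} (h : ∀ ν : F →L[ℝ] ℝ, ν x = 0) : x = 0 := by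
  by_contra hx
  obtain ⟨ν, hν⟩ := SeparatingDual.exists_ne_zero (R := ℝ) hx
  exact hν (h ν)

/-- the weak polynomiality hypothesis -/
def HypD (m : ℕ) (Φ : E → F) : Prop :=
  ∀ (ν : F →L[ℝ] ℝ) (e b : E), ∃ p : ℝ[X], p.natDegree ≤ m ∧
    ∀ t : ℝ, ν (Φ (t • e + b)) = p.eval t

lemma HypD.lineP {m : ℕ} {Φ : E → F} (h : HypD m Φ) (ν : F →L[ℝ] ℝ) :
    LineP m (fun y => ν (Φ y)) := fun e b => h ν e b

lemma iterDiff_clm (l : List E) (Φ : E → F) (ν : F →L[ℝ] ℝ) (x : E) :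
    ν (iterDiff l Φ x) = iterDiff l (fun y => ν (Φ y)) x :=
  iterDiff_linearmap l Φ (ν : F →ₗ[ℝ] ℝ) x

/-- mixed differences of order m+1 vanish -/
lemma HypD.iterDiff_vanish [SeparatingDual ℝ F] {m : ℕ} {Φ : E → F} (h : HypD m Φ)
    (l : List E) (hl : l.length = m + 1) (x : E) : iterDiff l Φ x = 0 := by
  apply sep_eq_zero
  intro ν
  show (ν : F →ₗ[ℝ] ℝ) (iterDiff l Φ x) = 0
  rw [iterDiff_linearmap]
  exact LineP.iterDiff_vanish m _ (h.lineP ν) l hl x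

lemma diffF_add_step (a b : E) (g : E → F) (x : E) :
    diffF (a + b) g x = diffF a g x + diffF b g x + diffF a (diffF b g) x := by
  simp only [diffF]
  rw [← add_assoc x a b]
  abel

/-- additivity of iterated differences in one slot, modulo higher order terms -/
lemma iterDiff_middle_add {Φ : E → F} {n : ℕ}
    (hF1 : ∀ l : List E, l.length = n + 1 → ∀ x, iterDiff l Φ x = 0)
    (l₁ l₂ : List E) (hlen : l₁.length + l₂.length + 1 = n) (a b : E) (x : E) :
    iterDiff (l₁ ++ (a + b) :: l₂) Φ x =
      iterDiff (l₁ ++ a :: l₂) Φ x + iterDiff (l₁ ++ b :: l₂) Φ x := by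
  have P : ∀ y : E, iterDiff (l₁ ++ y :: l₂) Φ = iterDiff (y :: (l₁ ++ l₂)) Φ :=
    fun y => iterDiff_perm List.perm_middle Φ
  have P2 : iterDiff (a :: b :: (l₁ ++ l₂)) Φ = iterDiff (l₁ ++ a :: b :: l₂) Φ :=
    iterDiff_perm
      ((((List.perm_middle (a := b) (l₁ := l₁) (l₂ := l₂)).symm.cons a)).trans
        (List.perm_middle (a := a) (l₁ := l₁) (l₂ := b :: l₂)).symm) Φ
  have hzero : iterDiff (l₁ ++ a :: b :: l₂) Φ x = 0 := by
    apply hF1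
    simp
    omega
  rw [P (a + b), P a, P b]
  simp only [iterDiff_cons]
  rw [diffF_add_step]
  have hz2 : diffF a (diffF b (iterDiff (l₁ ++ l₂) Φ)) x = 0 := by
    have h := hzero
    rw [← P2] at h
    simpa [iterDiff] using h
  rw [hz2, add_zero]

end Fvalued


section pieces

lemma LineP.diffF_same {d : ℕ} {G : E → ℝ} (hG : LineP d G) (h : E) :
    LineP d (diffF h G) := by
  intro e b
  obtain ⟨q₁, hq₁, hq₁E⟩ := hG e (b + h)
  obtain ⟨q₂, hq₂, hq₂E⟩ := hG e b
  refine ⟨q₁ - q₂, le_trans (natDegree_sub_le _ _) (max_le hq₁ hq₂), fun t => ?_⟩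
  simp only [diffF]
  rw [eval_sub, ← hq₁E t, ← hq₂E t]
  congr 2
  abel

lemma LineP.iterDiff_same {d : ℕ} {G : E → ℝ} (hG : LineP d G) (l : List E) :
    LineP d (iterDiff l G) := by
  induction l with
  | nil => exact hG
  | cons a l ih => exact ih.diffF_same a

/-- an additive function agreeing with a polynomial is linear -/
lemma additive_poly_linear {f : ℝ → ℝ} (hadd : ∀ s t, f (s + t) = f s + f t)
    {p : ℝ[X]} (hp : ∀ t, f t = p.eval t) : ∀ r, f r = r * f 1 := by
  have hf0 : f 0 = 0 := by
    have := hadd 0 0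
    simp at this
    linarith
  have hfd : fdiff p = C (f 1) := by
    apply Polynomial.funext
    intro t
    rw [fdiff_eval, eval_C, ← hp, ← hp]
    rw [hadd t 1]
    ring
  have hdeg : p.natDegree ≤ 1 := by
    by_contra hD
    push_neg at hD
    have h2 : 2 ≤ p.natDegree := hD
    set D := p.natDegree with hDdef
    have hc := coeff_fdiff_top (p := p) (k := D - 1) (by omega)
    rw [hfd] at hc
    have hne : D - 1 ≠ 0 := by omega
    rw [coeff_C, if_neg hne] at hc
    have hD1 : D - 1 + 1 = D := by omega
    rw [hD1] at hc
    have hp0 : p ≠ 0 := by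
      intro h0
      rw [h0] at hDdef
      simp at hDdef
      omega
    have hlc : p.coeff D ≠ 0 := by
      rw [hDdef]
      exact leadingCoeff_ne_zero.mpr hp0
    have : ((D - 1 : ℕ) : ℝ) + 1 ≠ 0 := by positivity
    have := mul_ne_zero this hlc
    rw [← hc] at this
    exact this rfl
  intro r
  have heval : ∀ t, f t = p.coeff 0 + p.coeff 1 * t := by
    intro t
    rw [hp, eval_eq_sum_range' (Nat.lt_succ_of_le hdeg)]
    rw [Finset.sum_range_succ, Finset.sum_range_succ, Finset.sum_range_zero]
    ring
  have h0 : p.coeff 0 = 0 := by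
    have := heval 0
    rw [hf0] at this
    linarith
  have h1 : f 1 = p.coeff 1 := by rw [heval 1, h0]; ring
  rw [heval r, h0, h1]
  ring

lemma ofFn_update_decomp {α : Type*} :
    ∀ (n : ℕ) (v : Fin n → α) (i : Fin n), ∃ l₁ l₂ : List α,
      l₁.length + l₂.length + 1 = n ∧
      ∀ x : α, List.ofFn (Function.update v i x) = l₁ ++ x :: l₂ := by
  intro n
  induction n with
  | zero => intro v i; exact i.elim0
  | succ n ih =>
    intro v i
    refine Fin.cases ?_ ?_ i
    · refine ⟨[], List.ofFn (fun j : Fin n => v j.succ), by simp, fun x => ?_⟩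
      have hfe : (fun j : Fin n => Function.update v 0 x j.succ) = fun j => v j.succ := by
        funext j
        rw [Function.update_of_ne (Fin.succ_ne_zero j)]
      rw [List.ofFn_succ, Function.update_self, hfe, List.nil_append]
    · intro i'
      obtain ⟨l₁, l₂, hlen, hfn⟩ := ih (fun j => v j.succ) i'
      refine ⟨v 0 :: l₁, l₂, by simp; omega, fun x => ?_⟩
      rw [List.ofFn_succ]
      have h0 : Function.update v i'.succ x 0 = v 0 :=
        Function.update_of_ne (Fin.succ_ne_zero i').symm x v
      have ht : (fun j : Fin n => Function.update v i'.succ x j.succ)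
          = Function.update (fun j => v j.succ) i' x := by
        funext j
        by_cases h : j = i'
        · subst h
          rw [Function.update_self, Function.update_self]
        · rw [Function.update_of_ne (fun hh => h (Fin.succ_injective n hh)),
            Function.update_of_ne h]
      rw [h0, ht, hfn x]
      rfl

end pieces


section expand

variable {F : Type*} [AddCommGroup F] [Module ℝ F] [TopologicalSpace F]

/-- the polynomial expansion of `t ↦ ν (M (t•e+b, …, t•e+b))` -/
noncomputable def expPoly (q : ℕ) (M : MultilinearMap ℝ (fun _ : Fin q => E) F)
    (ν : F →L[ℝ] ℝ) (e b : E) : ℝ[X] :=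
  ∑ s : Finset (Fin q),
    (ν (M (s.piecewise (fun _ => e) (fun _ => b)))) • X ^ s.card

lemma expPoly_eval (q : ℕ) (M : MultilinearMap ℝ (fun _ : Fin q => E) F)
    (ν : F →L[ℝ] ℝ) (e b : E) (t : ℝ) :
    ν (M fun _ => t • e + b) = (expPoly q M ν e b).eval t := by
  classical
  have h1 : (fun _ : Fin q => t • e + b) = (fun _ : Fin q => t • e) + (fun _ : Fin q => b) := rfl
  rw [h1, M.map_add_univ]
  rw [map_sum]
  rw [expPoly, eval_finset_sum]
  refine Finset.sum_congr rfl fun s _ => ?_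
  have h2 : s.piecewise (fun _ : Fin q => t • e) (fun _ : Fin q => b) =
      s.piecewise (fun i => t • (s.piecewise (fun _ : Fin q => e) (fun _ : Fin q => b)) i)
        (s.piecewise (fun _ : Fin q => e) (fun _ : Fin q => b)) := by
    funext i
    by_cases hi : i ∈ s
    · rw [Finset.piecewise_eq_of_mem _ _ _ hi, Finset.piecewise_eq_of_mem _ _ _ hi,
        Finset.piecewise_eq_of_mem _ _ _ hi]
    · simp [Finset.piecewise_eq_of_notMem _ _ _ hi]
  rw [h2, M.map_piecewise_smul]
  rw [Finset.prod_const]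
  rw [map_smul]
  rw [eval_smul, eval_pow, eval_X, smul_eq_mul, smul_eq_mul]
  ring

lemma expPoly_natDegree (q : ℕ) (M : MultilinearMap ℝ (fun _ : Fin q => E) F)
    (ν : F →L[ℝ] ℝ) (e b : E) : (expPoly q M ν e b).natDegree ≤ q := by
  classical
  refine le_trans (natDegree_sum_le _ _) ?_
  rw [Finset.fold_max_le]
  refine ⟨by omega, fun s _ => ?_⟩
  simp only [Function.comp_apply]
  refine le_trans (natDegree_smul_le _ _) ?_
  rw [natDegree_X_pow]
  exact le_trans (Finset.card_le_univ s) (by simp)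

lemma expPoly_coeff_top (q : ℕ) (M : MultilinearMap ℝ (fun _ : Fin q => E) F)
    (ν : F →L[ℝ] ℝ) (e b : E) :
    (expPoly q M ν e b).coeff q = ν (M fun _ => e) := by
  classical
  rw [expPoly, finset_sum_coeff]
  rw [Finset.sum_eq_single (Finset.univ : Finset (Fin q))]
  · rw [coeff_smul, coeff_X_pow]
    rw [if_pos (by simp), smul_eq_mul, mul_one, Finset.piecewise_univ]
  · intro s _ hne
    have hcard : s.card < q := by
      have := Finset.card_lt_card (Finset.ssubset_univ_iff.mpr hne)
      simpa using this
    rw [coeff_smul, coeff_X_pow, if_neg (by omega), smul_eq_mul, mul_zero]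
  · intro h
    exact absurd (Finset.mem_univ _) h

end expand


section main

variable {F : Type*} [AddCommGroup F] [Module ℝ F] [TopologicalSpace F] [SeparatingDual ℝ F]

theorem keyR : ∀ (m : ℕ) (Φ : E → F), HypD m Φ →
    ∃ (w₀ : F) (M : (k : Fin m) → MultilinearMap ℝ (fun _ : Fin (k.1 + 1) => E) F),
      (∀ (k : Fin m) (σ : Equiv.Perm (Fin (k.1 + 1))) (v : Fin (k.1 + 1) → E),
        M k (v ∘ σ) = M k v) ∧
      (∀ e : E, Φ e = w₀ + ∑ k : Fin m, M k (fun _ => e)) := by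
  intro m
  induction m with
  | zero =>
    intro Φ hΦ
    refine ⟨Φ 0, fun k => k.elim0, fun k => k.elim0, fun e => ?_⟩
    have hev : ∀ ν : F →L[ℝ] ℝ, ν (Φ e) = ν (Φ 0) := by
      intro ν
      obtain ⟨p, hp, hpE⟩ := hΦ ν e 0
      have h1 : ν (Φ e) = p.eval 1 := by rw [← hpE 1, one_smul, add_zero]
      have h0 : ν (Φ 0) = p.eval 0 := by rw [← hpE 0, zero_smul, add_zero]
      have hpc := eq_C_of_natDegree_le_zero hp
      rw [h1, h0]
      conv_lhs => rw [hpc]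
      conv_rhs => rw [hpc]
      simp
    have : Φ e - Φ 0 = 0 := by
      apply sep_eq_zero
      intro ν
      rw [map_sub, hev ν, sub_self]
    rw [Finset.univ_eq_empty, Finset.sum_empty, add_zero]
    rw [← sub_eq_zero]
    exact this
  | succ m ih =>
    intro Φ hΦ
    have F1 : ∀ l : List E, l.length = m + 2 → ∀ x, iterDiff l Φ x = 0 := by
      intro l hl x
      exact hΦ.iterDiff_vanish l (by omega) x
    have hfac : ((m + 1).factorial : ℝ) ≠ 0 := by
      exact_mod_cast Nat.factorial_ne_zero (m + 1)
    set c : ℝ := (((m + 1).factorial : ℝ))⁻¹ with hc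
    set Mfun : (Fin (m + 1) → E) → F := fun v => c • iterDiff (List.ofFn v) Φ 0 with hMfun
    have Madd : ∀ (v : Fin (m + 1) → E) (i : Fin (m + 1)) (a b : E),
        Mfun (Function.update v i (a + b)) =
          Mfun (Function.update v i a) + Mfun (Function.update v i b) := by
      intro v i a b
      obtain ⟨l₁, l₂, hlen, hfn⟩ := ofFn_update_decomp (m + 1) v i
      simp only [hMfun]
      rw [hfn, hfn, hfn, iterDiff_middle_add F1 l₁ l₂ hlen a b 0, smul_add]
    have Msmul : ∀ (v : Fin (m + 1) → E) (i : Fin (m + 1)) (r : ℝ) (a : E),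
        Mfun (Function.update v i (r • a)) = r • Mfun (Function.update v i a) := by
      intro v i r a
      obtain ⟨l₁, l₂, hlen, hfn⟩ := ofFn_update_decomp (m + 1) v i
      simp only [hMfun]
      rw [hfn, hfn]
      have key : iterDiff (l₁ ++ (r • a) :: l₂) Φ 0 = r • iterDiff (l₁ ++ a :: l₂) Φ 0 := by
        rw [← sub_eq_zero]
        apply sep_eq_zero
        intro ν
        rw [map_sub, map_smul]
        set f : ℝ → ℝ := fun t => ν (iterDiff (l₁ ++ (t • a) :: l₂) Φ 0) with hfdef
        have hadd : ∀ s t, f (s + t) = f s + f t := by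
          intro s t
          simp only [hfdef]
          rw [add_smul, iterDiff_middle_add F1 l₁ l₂ hlen (s • a) (t • a) 0, map_add]
        have hpoly : ∃ p : ℝ[X], ∀ t, f t = p.eval t := by
          have hP : ∀ y : E, iterDiff (l₁ ++ y :: l₂) Φ = iterDiff (y :: (l₁ ++ l₂)) Φ :=
            fun y => iterDiff_perm List.perm_middle Φ
          have hline2 : LineP (m + 1) (iterDiff (l₁ ++ l₂) (fun y => ν (Φ y))) :=
            (hΦ.lineP ν).iterDiff_same _
          obtain ⟨p, hpd, hpE⟩ := hline2 a 0
          refine ⟨p - C (p.eval 0), fun t => ?_⟩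
          simp only [hfdef]
          rw [hP]
          show ν (diffF (t • a) (iterDiff (l₁ ++ l₂) Φ) 0) = _
          simp only [diffF]
          rw [map_sub, iterDiff_clm, iterDiff_clm]
          have e1 : (0 : E) + t • a = t • a + 0 := by rw [zero_add, add_zero]
          have e2 : (0 : E) = (0 : ℝ) • a + 0 := by rw [zero_smul, add_zero]
          rw [e1, hpE t]
          conv_lhs => rw [e2, hpE 0]
          rw [eval_sub, eval_C]
        obtain ⟨p, hpE⟩ := hpoly
        have hlin := additive_poly_linear hadd hpE r
        have h1 : f 1 = ν (iterDiff (l₁ ++ a :: l₂) Φ 0) := by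
          simp only [hfdef, one_smul]
        rw [sub_eq_zero, smul_eq_mul]
        show f r = _
        rw [hlin, h1]
      rw [key, smul_comm]
    have Msym : ∀ (σ : Equiv.Perm (Fin (m + 1))) (v : Fin (m + 1) → E),
        Mfun (v ∘ σ) = Mfun v := by
      intro σ v
      simp only [hMfun]
      rw [iterDiff_perm (σ.ofFn_comp_perm v) Φ]
    set M : MultilinearMap ℝ (fun _ : Fin (m + 1) => E) F :=
      { toFun := Mfun
        map_update_add' := by
          intro dec v i a b
          have hde : dec = (fun a b => instDecidableEqFin (m + 1) a b) := Subsingleton.elim _ _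
          subst hde
          exact Madd v i a b
        map_update_smul' := by
          intro dec v i r a
          have hde : dec = (fun a b => instDecidableEqFin (m + 1) a b) := Subsingleton.elim _ _
          subst hde
          exact Msmul v i r a } with hM
    have Mdiag : ∀ e : E, M (fun _ => e) = c • iterDiff (List.replicate (m + 1) e) Φ 0 := by
      intro e
      show Mfun (fun _ => e) = _
      simp only [hMfun]
      rw [List.ofFn_const]
    set Φ₁ : E → F := fun y => Φ y - M (fun _ => y) with hΦ₁
    have hyp1 : HypD m Φ₁ := by
      intro ν e b
      obtain ⟨p, hpd, hpE⟩ := hΦ ν e b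
      refine ⟨p - expPoly (m + 1) M ν e b, ?_, ?_⟩
      · have hco : p.coeff (m + 1) = (expPoly (m + 1) M ν e b).coeff (m + 1) := by
          rw [expPoly_coeff_top]
          have h1 : ((m + 1).factorial : ℝ) * p.coeff (m + 1) =
              iterDiff (List.replicate (m + 1) (1 : ℝ)) (fun t => p.eval t) 0 :=
            (iterDiff_replicate_one_eval (m + 1) p hpd 0).symm
          have h2 : (fun t : ℝ => p.eval t) = fun t => ν (Φ (t • e + b)) := by
            funext t; rw [hpE t]
          rw [h2] at h1
          rw [show iterDiff (List.replicate (m + 1) (1 : ℝ)) (fun t => ν (Φ (t • e + b))) 0 =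
              iterDiff (List.replicate (m + 1) e) (fun y => ν (Φ y)) ((0 : ℝ) • e + b) from
            iterDiff_replicate_bridge (fun y => ν (Φ y)) e b (m + 1) 0] at h1
          rw [← iterDiff_clm] at h1
          have h3 : (0 : ℝ) • e + b = 0 + b := by rw [zero_smul]
          have htrans : iterDiff (List.replicate (m + 1) e) Φ (0 + b) =
              iterDiff (List.replicate (m + 1) e) Φ 0 := by
            have h4 := F1 (b :: List.replicate (m + 1) e) (by simp) 0
            simp only [iterDiff_cons, diffF] at h4
            rw [sub_eq_zero] at h4
            exact h4
          rw [h3, htrans] at h1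
          rw [Mdiag e, map_smul, smul_eq_mul, ← h1, hc]
          rw [inv_mul_cancel_left₀ hfac]
        rw [natDegree_le_iff_coeff_eq_zero]
        intro N hN
        rw [coeff_sub]
        rcases Nat.lt_or_ge (m + 1) N with h | h
        · rw [coeff_eq_zero_of_natDegree_lt (lt_of_le_of_lt hpd h),
            coeff_eq_zero_of_natDegree_lt (lt_of_le_of_lt (expPoly_natDegree (m + 1) M ν e b) h),
            sub_self]
        · have hNe : N = m + 1 := by omega
          rw [hNe, hco, sub_self]
      · intro t
        simp only [hΦ₁]
        rw [map_sub, eval_sub, ← hpE t, ← expPoly_eval]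
    obtain ⟨w₀, M', hsym', hrep'⟩ := ih Φ₁ hyp1
    refine ⟨w₀, fun k => Fin.lastCases (motive := fun k : Fin (m + 1) =>
        MultilinearMap ℝ (fun _ : Fin (k.1 + 1) => E) F) M (fun j => M' j) k, ?_, ?_⟩
    · intro k σ v
      induction k using Fin.lastCases with
      | last =>
        simp only [Fin.lastCases_last]
        show Mfun (v ∘ σ) = Mfun v
        exact Msym σ v
      | cast j =>
        simp only [Fin.lastCases_castSucc]
        exact hsym' j σ v
    · intro e
      rw [Fin.sum_univ_castSucc]
      simp only [Fin.lastCases_castSucc, Fin.lastCases_last]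
      have h6 : Φ e = Φ₁ e + M (fun _ => e) := by
        simp only [hΦ₁]
        rw [sub_add_cancel]
      rw [h6, hrep' e, add_assoc]
      rfl

end main

end Stmt7

/-- A continuous map `Φ : E → F` between locally convex Hausdorff real
topological vector spaces is a polynomial (i.e. `Φ(e) = w₀ + M₁(e) + ⋯ + Mₙ(e,…,e)` for
some symmetric multilinear maps `M_k : E^k → F`) iff there is `m ∈ ℕ` such that for every
continuous linear functional `ν` on `F` and all `e, b ∈ E` the function
`t ↦ ν(Φ(t•e + b))` is a polynomial of degree at most `m`. -/
theorem stmt_7 (E F : Type*)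
    [AddCommGroup E] [Module ℝ E] [TopologicalSpace E] [IsTopologicalAddGroup E]
    [ContinuousSMul ℝ E] [LocallyConvexSpace ℝ E] [T2Space E]
    [AddCommGroup F] [Module ℝ F] [TopologicalSpace F] [IsTopologicalAddGroup F]
    [ContinuousSMul ℝ F] [LocallyConvexSpace ℝ F] [T2Space F]
    (Φ : E → F) (hΦ : Continuous Φ) :
    (∃ (n : ℕ) (w₀ : F) (M : (k : Fin n) → MultilinearMap ℝ (fun _ : Fin (k.1 + 1) => E) F),
        (∀ (k : Fin n) (σ : Equiv.Perm (Fin (k.1 + 1))) (v : Fin (k.1 + 1) → E),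
          M k (v ∘ σ) = M k v) ∧
        (∀ e : E, Φ e = w₀ + ∑ k : Fin n, M k (fun _ => e))) ↔
      ∃ m : ℕ, ∀ (ν : F →L[ℝ] ℝ) (e b : E),
        ∃ p : Polynomial ℝ, p.natDegree ≤ m ∧ ∀ t : ℝ, ν (Φ (t • e + b)) = p.eval t := by
  constructor
  · rintro ⟨n, w₀, M, hsym, hrep⟩
    refine ⟨n, fun ν e b => ?_⟩
    refine ⟨Polynomial.C (ν w₀) + ∑ k : Fin n, Stmt7.expPoly (k.1 + 1) (M k) ν e b, ?_, ?_⟩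
    · refine le_trans (Polynomial.natDegree_add_le _ _) (max_le ?_ ?_)
      · simp
      · refine le_trans (Polynomial.natDegree_sum_le _ _) ?_
        rw [Finset.fold_max_le]
        refine ⟨by omega, fun k _ => ?_⟩
        simp only [Function.comp_apply]
        exact le_trans (Stmt7.expPoly_natDegree _ _ _ _ _) k.2
    · intro t
      rw [hrep (t • e + b)]
      rw [map_add, map_sum, Polynomial.eval_add, Polynomial.eval_C, Polynomial.eval_finset_sum]
      congr 1
      refine Finset.sum_congr rfl fun k _ => ?_
      exact Stmt7.expPoly_eval (k.1 + 1) (M k) ν e b t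
  · rintro ⟨m, hm⟩
    obtain ⟨w₀, M, hsym, hrep⟩ := Stmt7.keyR m Φ hm
    exact ⟨m, w₀, M, hsym, hrep⟩
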